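/- Let n ≥ 1 and d ≥ 1 be integers. There exist constants C_1 = C_1(n,d) > 0 and C_2 = C_2(n,d) > 0, depending only on n and d, with the following property: for every C^{d+1} function f on B^n and every C^{d+1} curve ω : [-1,1] → B^n satisfying 0 < ‖dω(t)‖ ≤ 1 for all t ∈ [-1,1] and ν_d(ω) ≤ 1, setting g(t) = f(ω(t)), one has M_{d+1}(f) ≥ C_1 · ( M_{d+1}(g) − C_2 · μ_d(f) · ν_d(ω) ). -/

import Mathlib

open scoped RealInnerProductSpace
noncomputable section

/-- Euclidean space ℝ^n. -/
abbrev En (n : ℕ) := EuclideanSpace ℝ (Fin n)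

/-- Maximum of absolute values of all partial derivatives of order `l` of `f` at `z`. -/
def partialMax (n l : ℕ) (f : En n → ℝ) (z : En n) : ℝ :=
  ⨆ α : Fin l → Fin n,
    |iteratedFDeriv ℝ l f z (fun j => EuclideanSpace.single (α j) (1 : ℝ))|

/-- `M_l(f)`: sup over the closed unit ball of the max partial derivative of order `l`. -/
def Ml (n l : ℕ) (f : En n → ℝ) : ℝ :=
  ⨆ z : Metric.closedBall (0 : En n) 1, partialMax n l f (z : En n)

/-- The class `U_d(Z)` of normalized `C^{d+1}` functions vanishing on `Z`. -/
def Ud (n d : ℕ) (Z : Set (En n)) : Set (En n → ℝ) :=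
  {f | ContDiff ℝ (d + 1 : ℕ) f ∧ (∀ z ∈ Z, f z = 0) ∧ Ml n 0 f = 1}

/-- The `d`-rigidity `RG_d(Z)`. -/
def RG (n d : ℕ) (Z : Set (En n)) : ℝ :=
  sInf (Ml n (d + 1) '' Ud n d Z)

/-- `‖d^k ω(t)‖`: max over coordinates of the `k`-th derivative of the curve `ω` at `t`. -/
def curveDer (n k : ℕ) (ω : ℝ → En n) (t : ℝ) : ℝ :=
  ⨆ i : Fin n, |iteratedDeriv k ω t i|

/-- `ν_d(ω,t)`: max over `2 ≤ k ≤ d+1` of `‖d^k ω(t)‖`. -/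
def nuAt (n d : ℕ) (ω : ℝ → En n) (t : ℝ) : ℝ :=
  ⨆ k : {k : ℕ // 2 ≤ k ∧ k ≤ d + 1}, curveDer n (k : ℕ) ω t

/-- `ν_d(ω)`: max over `t ∈ [-1,1]` of `ν_d(ω,t)`. -/
def nuCurve (n d : ℕ) (ω : ℝ → En n) : ℝ :=
  ⨆ t : Set.Icc (-1 : ℝ) 1, nuAt n d ω (t : ℝ)

/-- `M_k(ω)`: max over `t ∈ [-1,1]` of `‖d^k ω(t)‖`. -/
def Mkc (n k : ℕ) (ω : ℝ → En n) : ℝ :=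
  ⨆ t : Set.Icc (-1 : ℝ) 1, curveDer n k ω (t : ℝ)

/-- Membership in the family `Ω_d(Z,z₀)` of admissible curves. -/
def InOmega (n d : ℕ) (Z : Set (En n)) (z₀ : En n) (ω : ℝ → En n) : Prop :=
  ContDiff ℝ (d + 1 : ℕ) ω ∧
  (∀ t ∈ Set.Icc (-1 : ℝ) 1, ω t ∈ Metric.closedBall (0 : En n) 1) ∧
  (∃ t ∈ Set.Icc (-1 : ℝ) 1, ω t = z₀) ∧
  (∃ z : Fin (d + 1) → En n, Function.Injective z ∧
    ∀ j, z j ∈ Z ∧ ∃ t ∈ Set.Icc (-1 : ℝ) 1, ω t = z j) ∧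
  (∀ t ∈ Set.Icc (-1 : ℝ) 1, 0 < curveDer n 1 ω t ∧ curveDer n 1 ω t ≤ 1) ∧
  nuCurve n d ω ≤ 1

/-- Pointwise `d`-thickness `ν_d(Z,z₀)`. -/
def nuZpt (n d : ℕ) (Z : Set (En n)) (z₀ : En n) : ℝ :=
  sInf (nuCurve n d '' {ω | InOmega n d Z z₀ ω})

/-- `d`-thickness `ν_d(Z)`. -/
def nuZ (n d : ℕ) (Z : Set (En n)) : ℝ :=
  ⨆ z₀ : Metric.sphere (0 : En n) 1, nuZpt n d Z (z₀ : En n)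

/-- Sup of `|P|` over a set `S`. -/
def polySup (n : ℕ) (P : MvPolynomial (Fin n) ℝ) (S : Set (En n)) : ℝ :=
  ⨆ x : S, |MvPolynomial.eval (fun i => (x : En n) i) P|

/-- The Remez constant `R_d(Z)` (value in `[1,∞]`). -/
def Remez (n d : ℕ) (Z : Set (En n)) : ENNReal :=
  sInf {K : ENNReal | 1 ≤ K ∧ ∀ P : MvPolynomial (Fin n) ℝ, P.totalDegree ≤ d →
    ENNReal.ofReal (polySup n P (Metric.closedBall (0 : En n) 1)) ≤
      K * ENNReal.ofReal (polySup n P Z)}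

/-- The inverse Remez constant `R̂_d(Z) = 1/R_d(Z)` (zero when `R_d(Z) = ∞`). -/
def invRemez (n d : ℕ) (Z : Set (En n)) : ℝ :=
  ((Remez n d Z)⁻¹).toReal

/-- The closed axis-parallel grid `ε`-cube with index `α`. -/
def gridCube (n : ℕ) (ε : ℝ) (α : Fin n → ℤ) : Set (En n) :=
  {x | ∀ i, (α i : ℝ) * ε ≤ x i ∧ x i ≤ ((α i : ℝ) + 1) * ε}

/-- The covering number `M(ε,Z)`: the number of grid `ε`-cubes meeting `Z`. -/
def covNum (n : ℕ) (ε : ℝ) (Z : Set (En n)) : ℕ :=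
  Set.ncard {α : Fin n → ℤ | (gridCube n ε α ∩ Z).Nonempty}

/-- Box (entropy) dimension of `Z`. -/
def dimE (n : ℕ) (Z : Set (En n)) : ℝ :=
  Filter.limsup (fun ε : ℝ => Real.log (covNum n ε Z) / Real.log (1 / ε))
    (nhdsWithin 0 (Set.Ioi 0))

/-- The straight line through `z₀` with direction `v`. -/
def lineThrough (n : ℕ) (z₀ v : En n) : Set (En n) :=
  {x | ∃ t : ℝ, x = z₀ + t • v}

/-- Orthogonal projection of `p` onto the line through `z₀` with unit direction `v`. -/
def projLine (n : ℕ) (z₀ v p : En n) : En n :=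
  z₀ + (inner ℝ (p - z₀) v : ℝ) • v

/-- Distance from `p` to the line through `z₀` with unit direction `v`. -/
def distLine (n : ℕ) (z₀ v p : En n) : ℝ :=
  dist p (projLine n z₀ v p)

/-- `ρ(ℓ,𝒵)`: max distance of the `d+1` points to the line. -/
def rhoLine (n d : ℕ) (z₀ v : En n) (z : Fin (d + 1) → En n) : ℝ :=
  ⨆ i, distLine n z₀ v (z i)

/-- `κ(ℓ,𝒵)`: min distance between projections of the `d+1` points onto the line. -/
def kappaLine (n d : ℕ) (z₀ v : En n) (z : Fin (d + 1) → En n) : ℝ :=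
  ⨅ p : {q : Fin (d + 1) × Fin (d + 1) // q.1 ≠ q.2},
    dist (projLine n z₀ v (z (p : Fin (d + 1) × Fin (d + 1)).1))
      (projLine n z₀ v (z (p : Fin (d + 1) × Fin (d + 1)).2))

/-- Pointwise approximate `ad`-thickness `ν̄_d(Z,z₀)`. -/
def barNuZpt (n d : ℕ) (Z : Set (En n)) (z₀ : En n) : ℝ :=
  sInf {m : ℝ | ∃ v : En n, ‖v‖ = 1 ∧
    (lineThrough n z₀ v ∩ Metric.closedBall (0 : En n) (1 / 3)).Nonempty ∧
    ∃ z : Fin (d + 1) → En n, Function.Injective z ∧ (∀ i, z i ∈ Z) ∧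
      m = rhoLine n d z₀ v z / (kappaLine n d z₀ v z) ^ d}

/-- Approximate `ad`-thickness `ν̄_d(Z)`. -/
def barNuZ (n d : ℕ) (Z : Set (En n)) : ℝ :=
  ⨆ z₀ : Metric.sphere (0 : En n) 1, barNuZpt n d Z (z₀ : En n)

/-- The axis-parallel cube with corner `a` and side `s`. -/
def cube (n : ℕ) (a : En n) (s : ℝ) : Set (En n) :=
  {x | ∀ i, a i ≤ x i ∧ x i ≤ a i + s}

/-- `Z` is `h`-dense in the cube with corner `a` and side `s`. -/
def hDense (n : ℕ) (a : En n) (s h : ℝ) (Z : Set (En n)) : Prop :=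
  ∀ b : En n, (∀ i, a i ≤ b i ∧ b i + h ≤ a i + s) → (Z ∩ cube n b h).Nonempty

/-- `μ_d(f,z)`: max over `1 ≤ k ≤ d` of the order-`k` partial derivatives of `f` at `z`. -/
def muF (n d : ℕ) (f : En n → ℝ) (z : En n) : ℝ :=
  ⨆ k : {k : ℕ // 1 ≤ k ∧ k ≤ d}, partialMax n (k : ℕ) f z

/-- `μ_d(f)`: max over the unit ball of `μ_d(f,z)`. -/
def muFglob (n d : ℕ) (f : En n → ℝ) : ℝ :=
  ⨆ z : Metric.closedBall (0 : En n) 1, muF n d f (z : En n)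

/-- `M_m(g)` for a function of one variable on `[-1,1]`. -/
def MIcc (m : ℕ) (g : ℝ → ℝ) : ℝ :=
  ⨆ t : Set.Icc (-1 : ℝ) 1, |iteratedDeriv m g (t : ℝ)|

end
section AuxLemmas

open Set Metric Finset

variable {n d : ℕ}

lemma En.abs_coord_le_norm (x : En n) (i : Fin n) : |x i| ≤ ‖x‖ := by
  rw [EuclideanSpace.norm_eq, ← Real.sqrt_sq_eq_abs]
  apply Real.sqrt_le_sqrt
  have := Finset.single_le_sum (f := fun j => ‖x j‖ ^ 2) (fun j _ => sq_nonneg _)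
    (Finset.mem_univ i)
  simpa [Real.norm_eq_abs, sq_abs] using this

lemma En.norm_le_sum_abs (x : En n) : ‖x‖ ≤ ∑ i, |x i| := by
  rw [EuclideanSpace.norm_eq]
  have h1 : ∑ i, ‖x i‖ ^ 2 ≤ (∑ i, |x i|) ^ 2 := by
    calc ∑ i, ‖x i‖ ^ 2 ≤ ∑ i, |x i| * ∑ j, |x j| := by
          refine Finset.sum_le_sum fun i _ => ?_
          rw [Real.norm_eq_abs, sq]
          exact mul_le_mul_of_nonneg_left
            (Finset.single_le_sum (fun j _ => abs_nonneg (x j)) (Finset.mem_univ i))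
            (abs_nonneg _)
      _ = (∑ i, |x i|) ^ 2 := by rw [← Finset.sum_mul, sq]
  calc Real.sqrt (∑ i, ‖x i‖ ^ 2) ≤ Real.sqrt ((∑ i, |x i|) ^ 2) := Real.sqrt_le_sqrt h1
    _ = ∑ i, |x i| := Real.sqrt_sq (Finset.sum_nonneg fun i _ => abs_nonneg _)

lemma En.decomp (x : En n) : ∑ i, x i • EuclideanSpace.single i (1 : ℝ) = x := by
  ext j
  have : (∑ i, x i • EuclideanSpace.single i (1 : ℝ)) j
      = ∑ i, (x i • EuclideanSpace.single i (1 : ℝ)) j := by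
    exact map_sum (EuclideanSpace.proj (𝕜 := ℝ) j) (fun i => x i • EuclideanSpace.single i (1 : ℝ)) Finset.univ
  rw [this]
  simp [EuclideanSpace.single_apply, mul_comm]

lemma abs_coord_le_curveDer (k : ℕ) (ω : ℝ → En n) (t : ℝ) (i : Fin n) :
    |iteratedDeriv k ω t i| ≤ curveDer n k ω t := by
  unfold curveDer
  exact le_ciSup (f := fun i : Fin n => |iteratedDeriv k ω t i|)
    (Set.Finite.bddAbove (Set.finite_range _)) i

lemma curveDer_nonneg (k : ℕ) (ω : ℝ → En n) (t : ℝ) : 0 ≤ curveDer n k ω t := by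
  unfold curveDer
  exact Real.iSup_nonneg fun _ => abs_nonneg _

lemma curveDer_le_norm (hn : 1 ≤ n) (k : ℕ) (ω : ℝ → En n) (t : ℝ) :
    curveDer n k ω t ≤ ‖iteratedDeriv k ω t‖ := by
  haveI : Nonempty (Fin n) := ⟨⟨0, hn⟩⟩
  unfold curveDer
  exact ciSup_le fun i => En.abs_coord_le_norm _ i

lemma norm_le_curveDer_mul (k : ℕ) (ω : ℝ → En n) (t : ℝ) :
    ‖iteratedDeriv k ω t‖ ≤ n * curveDer n k ω t := by
  refine (En.norm_le_sum_abs _).trans ?_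
  have := Finset.sum_le_card_nsmul Finset.univ (fun i => |iteratedDeriv k ω t i|)
    (curveDer n k ω t) (fun i _ => abs_coord_le_curveDer k ω t i)
  simpa [nsmul_eq_mul] using this

lemma nuCurve_nonneg (ω : ℝ → En n) : 0 ≤ nuCurve n d ω := by
  unfold nuCurve nuAt
  exact Real.iSup_nonneg fun _ => Real.iSup_nonneg fun _ => curveDer_nonneg _ _ _

lemma curveDer_le_nuAt {k : ℕ} (hk2 : 2 ≤ k) (hkd : k ≤ d + 1) (ω : ℝ → En n) (t : ℝ) :
    curveDer n k ω t ≤ nuAt n d ω t := by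
  have hfin : {k : ℕ | 2 ≤ k ∧ k ≤ d + 1}.Finite :=
    (Set.finite_Icc 2 (d + 1)).subset fun x hx => Set.mem_Icc.mpr hx
  haveI : Finite {k : ℕ // 2 ≤ k ∧ k ≤ d + 1} := hfin.to_subtype
  unfold nuAt
  exact le_ciSup (f := fun k : {k : ℕ // 2 ≤ k ∧ k ≤ d + 1} => curveDer n (k : ℕ) ω t)
    (Set.Finite.bddAbove (Set.finite_range _)) ⟨k, hk2, hkd⟩

lemma continuous_iteratedDeriv_of_contDiff {E' : Type*} [NormedAddCommGroup E']
    [NormedSpace ℝ E'] {k N : ℕ} (hk : k ≤ N) {ω : ℝ → E'} (hω : ContDiff ℝ (N : ℕ) ω) :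
    Continuous (iteratedDeriv k ω) := by
  rw [iteratedDeriv_eq_equiv_comp]
  exact (LinearIsometryEquiv.continuous _).comp
    (hω.continuous_iteratedFDeriv (by exact_mod_cast hk))

lemma nuAt_le_nuCurve (hn : 1 ≤ n) (hd : 1 ≤ d) {ω : ℝ → En n}
    (hω : ContDiff ℝ (d + 1 : ℕ) ω) {t : ℝ} (ht : t ∈ Set.Icc (-1 : ℝ) 1) :
    nuAt n d ω t ≤ nuCurve n d ω := by
  have hbdd : ∃ M : ℝ, ∀ s ∈ Set.Icc (-1 : ℝ) 1, nuAt n d ω s ≤ M := by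
    set S : ℕ → ℝ := fun k => sSup ((fun s => ‖iteratedDeriv k ω s‖) '' Set.Icc (-1 : ℝ) 1)
      with hS
    refine ⟨∑ k ∈ Finset.range (d + 2), max (S k) 0, fun s hs => ?_⟩
    haveI : Nonempty {k : ℕ // 2 ≤ k ∧ k ≤ d + 1} := ⟨⟨2, le_refl 2, by omega⟩⟩
    unfold nuAt
    apply ciSup_le
    rintro ⟨k, hk2, hkd⟩
    have hcont : Continuous (iteratedDeriv k ω) :=
      continuous_iteratedDeriv_of_contDiff hkd hω
    have h1 : curveDer n k ω s ≤ S k := by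
      refine (curveDer_le_norm hn k ω s).trans (le_csSup ?_ ?_)
      · exact (isCompact_Icc.image hcont.norm).bddAbove
      · exact Set.mem_image_of_mem _ hs
    refine h1.trans (le_trans (le_max_left (S k) 0) ?_)
    exact Finset.single_le_sum (f := fun k => max (S k) 0)
      (fun j _ => le_max_right _ _) (Finset.mem_range.mpr (by omega))
  obtain ⟨M, hM⟩ := hbdd
  have hbd : BddAbove (Set.range fun s : Set.Icc (-1 : ℝ) 1 => nuAt n d ω (s : ℝ)) := by
    refine ⟨M, ?_⟩
    rintro x ⟨s, rfl⟩
    exact hM s s.2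
  unfold nuCurve
  exact le_ciSup hbd (⟨t, ht⟩ : Set.Icc (-1 : ℝ) 1)

lemma curveDer_le_one (hn : 1 ≤ n) (hd : 1 ≤ d) {ω : ℝ → En n}
    (hω : ContDiff ℝ (d + 1 : ℕ) ω)
    (hsp : ∀ t ∈ Set.Icc (-1 : ℝ) 1, curveDer n 1 ω t ≤ 1)
    (hnu : nuCurve n d ω ≤ 1) {t : ℝ} (ht : t ∈ Set.Icc (-1 : ℝ) 1) {k : ℕ}
    (hk1 : 1 ≤ k) (hkd : k ≤ d + 1) : curveDer n k ω t ≤ 1 := by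
  rcases eq_or_lt_of_le hk1 with h | h
  · exact h ▸ hsp t ht
  · exact ((curveDer_le_nuAt h hkd ω t).trans (nuAt_le_nuCurve hn hd hω ht)).trans hnu

lemma curveDer_le_nu (hn : 1 ≤ n) (hd : 1 ≤ d) {ω : ℝ → En n}
    (hω : ContDiff ℝ (d + 1 : ℕ) ω) {t : ℝ} (ht : t ∈ Set.Icc (-1 : ℝ) 1) {k : ℕ}
    (hk2 : 2 ≤ k) (hkd : k ≤ d + 1) : curveDer n k ω t ≤ nuCurve n d ω :=
  (curveDer_le_nuAt hk2 hkd ω t).trans (nuAt_le_nuCurve hn hd hω ht)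

lemma iteratedDeriv_clm_comp {F' G' : Type*} [NormedAddCommGroup F'] [NormedSpace ℝ F']
    [NormedAddCommGroup G'] [NormedSpace ℝ G'] (L : F' →L[ℝ] G') (h : ℝ → F') (k : ℕ)
    (hh : ContDiff ℝ (k : ℕ) h) (t : ℝ) :
    iteratedDeriv k (fun s => L (h s)) t = L (iteratedDeriv k h t) := by
  have hc := L.iteratedFDeriv_comp_left (hh.contDiffAt (x := t)) (le_refl ((k : ℕ) : WithTop ℕ∞))
  rw [iteratedDeriv_eq_iteratedFDeriv, iteratedDeriv_eq_iteratedFDeriv]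
  have : (fun s => L (h s)) = L ∘ h := rfl
  rw [this, hc]
  rfl

lemma norm_fderiv_eq_iteratedFDeriv_one {E' : Type*} [NormedAddCommGroup E']
    [NormedSpace ℝ E'] (F : E' → ℝ) (z : E') :
    ‖fderiv ℝ F z‖ = ‖iteratedFDeriv ℝ 1 F z‖ := by
  rw [← norm_iteratedFDeriv_fderiv, norm_iteratedFDeriv_zero]

end AuxLemmas
section KeyLemma

open Set Metric Finset

lemma key_estimate (n d : ℕ) (hn : 1 ≤ n) (hd : 1 ≤ d) :
    ∀ m : ℕ, 1 ≤ m → m ≤ d + 1 →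
    ∃ K c : ℝ, 1 ≤ K ∧ 0 ≤ c ∧
      ∀ ω : ℝ → En n, ContDiff ℝ (d + 1 : ℕ) ω →
        (∀ t ∈ Set.Icc (-1 : ℝ) 1, ω t ∈ Metric.closedBall (0 : En n) 1) →
        (∀ t ∈ Set.Icc (-1 : ℝ) 1, curveDer n 1 ω t ≤ 1) →
        nuCurve n d ω ≤ 1 →
        ∀ F : En n → ℝ, ContDiff ℝ (m : ℕ) F →
        ∀ A B : ℝ, 0 ≤ B →
          (∀ z ∈ Metric.closedBall (0 : En n) 1, ‖iteratedFDeriv ℝ m F z‖ ≤ A) →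
          (∀ k, 1 ≤ k → k < m → ∀ z ∈ Metric.closedBall (0 : En n) 1,
            ‖iteratedFDeriv ℝ k F z‖ ≤ B) →
          ∀ t ∈ Set.Icc (-1 : ℝ) 1,
            |iteratedDeriv m (fun u => F (ω u)) t| ≤ K * A + c * B * nuCurve n d ω := by
  have hn1 : (1 : ℝ) ≤ (n : ℝ) := by exact_mod_cast hn
  intro m hm1
  induction m, hm1 using Nat.le_induction with
  | base =>
    intro _
    refine ⟨(n : ℝ), 0, hn1, le_refl 0, ?_⟩
    intro ω hω hball hsp hnu F hF A B hB0 hA hB t ht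
    have hA0 : 0 ≤ A := le_trans (norm_nonneg _) (hA 0 (Metric.mem_closedBall_self zero_le_one))
    rw [iteratedDeriv_one]
    have hFd : HasFDerivAt F (fderiv ℝ F (ω t)) (ω t) :=
      (hF.differentiable (by simp)).differentiableAt.hasFDerivAt
    have hωd : HasDerivAt ω (deriv ω t) t :=
      ((hω.differentiable (by simp)).differentiableAt).hasDerivAt
    have hc : HasDerivAt (fun u => F (ω u)) (fderiv ℝ F (ω t) (deriv ω t)) t :=
      hFd.comp_hasDerivAt t hωd
    rw [hc.deriv]
    have h1 : ‖fderiv ℝ F (ω t)‖ ≤ A := by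
      rw [norm_fderiv_eq_iteratedFDeriv_one]
      exact hA _ (hball t ht)
    have h2 : ‖deriv ω t‖ ≤ (n : ℝ) * 1 := by
      have h3 : ‖iteratedDeriv 1 ω t‖ ≤ (n : ℝ) * curveDer n 1 ω t := norm_le_curveDer_mul 1 ω t
      rw [iteratedDeriv_one] at h3
      exact h3.trans (mul_le_mul_of_nonneg_left (hsp t ht) (by positivity))
    calc |fderiv ℝ F (ω t) (deriv ω t)| = ‖fderiv ℝ F (ω t) (deriv ω t)‖ :=
          (Real.norm_eq_abs _).symm
      _ ≤ ‖fderiv ℝ F (ω t)‖ * ‖deriv ω t‖ := (fderiv ℝ F (ω t)).le_opNorm _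
      _ ≤ A * ((n : ℝ) * 1) := mul_le_mul h1 h2 (norm_nonneg _) hA0
      _ = (n : ℝ) * A + 0 * B * nuCurve n d ω := by ring
  | succ m hm1 ih =>
    intro hmd
    obtain ⟨K, c, hK1, hc0, ih⟩ := ih (by omega)
    refine ⟨(n : ℝ) * K, (n : ℝ) * (c + 2 ^ m * (m.factorial : ℝ) * (n : ℝ) ^ m), ?_, ?_, ?_⟩
    · nlinarith
    · have h2 : (0 : ℝ) ≤ 2 ^ m * (m.factorial : ℝ) * (n : ℝ) ^ m := by positivity
      nlinarith
    intro ω hω hball hsp hnu F hF A B hB0 hA hB t ht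
    set ν := nuCurve n d ω with hνdef
    have hν0 : 0 ≤ ν := nuCurve_nonneg ω
    have hA0 : 0 ≤ A := le_trans (norm_nonneg _) (hA 0 (Metric.mem_closedBall_self zero_le_one))
    have hωm : ContDiff ℝ (m : ℕ) ω := hω.of_le (by exact_mod_cast (by omega : m ≤ d + 1))
    have hdω : ContDiff ℝ (d : ℕ) (deriv ω) := by
      have h' : ContDiff ℝ ((d : WithTop ℕ∞) + 1) ω := by exact_mod_cast hω
      exact (contDiff_succ_iff_deriv.mp h').2.2
    have hFder : ContDiff ℝ (m : ℕ) (fderiv ℝ F) :=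
      hF.fderiv_right (by exact_mod_cast le_refl (m + 1))
    have hFi : ∀ i : Fin n,
        ContDiff ℝ (m : ℕ) (fun z => fderiv ℝ F z (EuclideanSpace.single i (1 : ℝ))) :=
      fun i => hFder.clm_apply contDiff_const
    have hui : ∀ i : Fin n,
        ContDiff ℝ (m : ℕ) (fun s => fderiv ℝ F (ω s) (EuclideanSpace.single i (1 : ℝ))) :=
      fun i => (hFi i).comp hωm
    have hvi : ∀ i : Fin n, ContDiff ℝ (m : ℕ) (fun s => deriv ω s i) := by
      intro i
      have h1 : ContDiff ℝ (m : ℕ) ((EuclideanSpace.proj (𝕜 := ℝ) i) ∘ deriv ω) :=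
        (EuclideanSpace.proj i).contDiff.comp
          (hdω.of_le (by exact_mod_cast (by omega : m ≤ d)))
      exact h1
    have hprod : ∀ i : Fin n, ContDiff ℝ (m : ℕ)
        (fun s => deriv ω s i * fderiv ℝ F (ω s) (EuclideanSpace.single i (1 : ℝ))) :=
      fun i => (hvi i).mul (hui i)
    -- chain rule expansion
    have hderiv_expand : deriv (fun u => F (ω u)) =
        fun s => ∑ i : Fin n, deriv ω s i * fderiv ℝ F (ω s) (EuclideanSpace.single i (1 : ℝ)) := by
      funext s
      have hFd : HasFDerivAt F (fderiv ℝ F (ω s)) (ω s) :=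
        (hF.differentiable (by simp)).differentiableAt.hasFDerivAt
      have hωd : HasDerivAt ω (deriv ω s) s :=
        ((hω.differentiable
          (by simp)).differentiableAt).hasDerivAt
      have hc : HasDerivAt (fun u => F (ω u)) (fderiv ℝ F (ω s) (deriv ω s)) s :=
        hFd.comp_hasDerivAt s hωd
      rw [hc.deriv]
      conv_lhs => rw [← En.decomp (deriv ω s)]
      rw [map_sum]
      exact Finset.sum_congr rfl fun i _ => by rw [map_smul]; simp [smul_eq_mul]
    -- sum rule
    have hsum_deriv : iteratedDeriv m
        (fun s => ∑ i : Fin n, deriv ω s i * fderiv ℝ F (ω s) (EuclideanSpace.single i (1 : ℝ))) t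
        = ∑ i : Fin n, iteratedDeriv m
            (fun s => deriv ω s i * fderiv ℝ F (ω s) (EuclideanSpace.single i (1 : ℝ))) t := by
      have h2 := iteratedFDeriv_sum (𝕜 := ℝ) (u := Finset.univ)
        (f := fun (i : Fin n) (s : ℝ) =>
          deriv ω s i * fderiv ℝ F (ω s) (EuclideanSpace.single i (1 : ℝ)))
        (i := m) (fun j _ => hprod j)
      rw [iteratedDeriv_eq_iteratedFDeriv, h2]
      rw [Finset.sum_apply, ContinuousMultilinearMap.sum_apply]
      rfl
    -- coordinate derivative identity
    have hvder : ∀ (i : Fin n) (j : ℕ), j ≤ m →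
        iteratedDeriv j (fun s => deriv ω s i) t = iteratedDeriv (j + 1) ω t i := by
      intro i j hj
      have h1 : (fun s => deriv ω s i) =
          fun s => (EuclideanSpace.proj (𝕜 := ℝ) i) (deriv ω s) := rfl
      rw [h1, iteratedDeriv_clm_comp _ _ j (hdω.of_le (by exact_mod_cast (by omega : j ≤ d))) t,
        ← iteratedDeriv_succ']
      rfl
    have hnormID : ∀ (h : ℝ → ℝ) (j : ℕ) (s : ℝ),
        ‖iteratedFDeriv ℝ j h s‖ = |iteratedDeriv j h s| := fun h j s => by
      rw [norm_iteratedFDeriv_eq_norm_iteratedDeriv, Real.norm_eq_abs]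
    -- bounds on the curve factors
    have hv0 : ∀ i : Fin n, ‖iteratedFDeriv ℝ 0 (fun s => deriv ω s i) t‖ ≤ 1 := by
      intro i
      rw [hnormID]
      simp only [iteratedDeriv_zero]
      have h3 := abs_coord_le_curveDer (n := n) 1 ω t i
      rw [iteratedDeriv_one] at h3
      exact h3.trans (hsp t ht)
    have hvj : ∀ (i : Fin n) (j : ℕ), 1 ≤ j → j ≤ m →
        ‖iteratedFDeriv ℝ j (fun s => deriv ω s i) t‖ ≤ ν := by
      intro i j hj1 hjm
      rw [hnormID, hvder i j hjm]
      exact (abs_coord_le_curveDer (j + 1) ω t i).trans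
        (curveDer_le_nu hn hd hω ht (by omega) (by omega))
    -- bounds on derivatives of z ↦ fderiv F z (e i)
    have hFi_top : ∀ i : Fin n, ∀ z ∈ Metric.closedBall (0 : En n) 1,
        ‖iteratedFDeriv ℝ m (fun z' => fderiv ℝ F z' (EuclideanSpace.single i (1 : ℝ))) z‖ ≤ A := by
      intro i z hz
      have h1 := norm_iteratedFDeriv_clm_apply_const (𝕜 := ℝ) (f := fderiv ℝ F)
        (c := EuclideanSpace.single i (1 : ℝ)) (x := z) hFder.contDiffAt (le_refl _)
      rw [EuclideanSpace.norm_single, norm_one, one_mul, norm_iteratedFDeriv_fderiv] at h1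
      exact h1.trans (hA z hz)
    have hFi_low : ∀ i : Fin n, ∀ k, 1 ≤ k → k < m → ∀ z ∈ Metric.closedBall (0 : En n) 1,
        ‖iteratedFDeriv ℝ k (fun z' => fderiv ℝ F z' (EuclideanSpace.single i (1 : ℝ))) z‖ ≤ B := by
      intro i k hk1 hkm z hz
      have h1 := norm_iteratedFDeriv_clm_apply_const (𝕜 := ℝ) (f := fderiv ℝ F)
        (c := EuclideanSpace.single i (1 : ℝ)) (x := z) hFder.contDiffAt
        (by exact_mod_cast (by omega : k ≤ m))
      rw [EuclideanSpace.norm_single, norm_one, one_mul, norm_iteratedFDeriv_fderiv] at h1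
      exact h1.trans (hB (k + 1) (by omega) (by omega) z hz)
    have hFi_zero : ∀ i : Fin n, ∀ z ∈ Metric.closedBall (0 : En n) 1,
        ‖iteratedFDeriv ℝ 0 (fun z' => fderiv ℝ F z' (EuclideanSpace.single i (1 : ℝ))) z‖ ≤ B := by
      intro i z hz
      rw [norm_iteratedFDeriv_zero]
      calc ‖fderiv ℝ F z (EuclideanSpace.single i (1 : ℝ))‖
          ≤ ‖fderiv ℝ F z‖ * ‖EuclideanSpace.single i (1 : ℝ)‖ := (fderiv ℝ F z).le_opNorm _
        _ = ‖iteratedFDeriv ℝ 1 F z‖ := by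
            rw [EuclideanSpace.norm_single, norm_one, mul_one,
              norm_fderiv_eq_iteratedFDeriv_one]
        _ ≤ B := hB 1 (le_refl 1) (by omega) z hz
    -- composition bound for low-order derivatives of s ↦ fderiv F (ω s) (e i)
    have hui_low : ∀ (i : Fin n) (k : ℕ), k < m →
        ‖iteratedFDeriv ℝ k
          (fun s => fderiv ℝ F (ω s) (EuclideanSpace.single i (1 : ℝ))) t‖ ≤
          (k.factorial : ℝ) * B * (n : ℝ) ^ k := by
      intro i k hkm
      have hcomp : (fun s => fderiv ℝ F (ω s) (EuclideanSpace.single i (1 : ℝ))) =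
          (fun z => fderiv ℝ F z (EuclideanSpace.single i (1 : ℝ))) ∘ ω := rfl
      rw [hcomp]
      refine norm_iteratedFDeriv_comp_le (𝕜 := ℝ) (N := ((m : ℕ) : WithTop ℕ∞)) (hFi i) hωm
        (by exact_mod_cast (by omega : k ≤ m)) t (C := B) (D := (n : ℝ)) ?_ ?_
      · intro l hl
        rcases Nat.eq_zero_or_pos l with h0 | h1
        · subst h0; exact hFi_zero i _ (hball t ht)
        · exact hFi_low i l h1 (by omega) _ (hball t ht)
      · intro l hl1 hlk
        rw [norm_iteratedFDeriv_eq_norm_iteratedDeriv]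
        have h4 : ‖iteratedDeriv l ω t‖ ≤ (n : ℝ) * curveDer n l ω t := norm_le_curveDer_mul l ω t
        have h5 : curveDer n l ω t ≤ 1 :=
          curveDer_le_one hn hd hω hsp hnu ht hl1 (by omega)
        calc ‖iteratedDeriv l ω t‖ ≤ (n : ℝ) * 1 :=
              h4.trans (mul_le_mul_of_nonneg_left h5 (by positivity))
          _ = (n : ℝ) ^ 1 := by ring
          _ ≤ (n : ℝ) ^ l := pow_le_pow_right₀ hn1 hl1
    -- top-order bound from the induction hypothesis
    have hui_top : ∀ i : Fin n,
        |iteratedDeriv m (fun s => fderiv ℝ F (ω s) (EuclideanSpace.single i (1 : ℝ))) t| ≤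
          K * A + c * B * ν := by
      intro i
      exact ih ω hω hball hsp hnu _ (hFi i) A B hB0 (hFi_top i)
        (fun k hk1 hkm => hFi_low i k hk1 hkm) t ht
    -- per-coordinate product bound
    have hprod_bound : ∀ i : Fin n,
        |iteratedDeriv m
          (fun s => deriv ω s i * fderiv ℝ F (ω s) (EuclideanSpace.single i (1 : ℝ))) t| ≤
          (K * A + c * B * ν) + (2 ^ m * (m.factorial : ℝ) * (n : ℝ) ^ m) * B * ν := by
      intro i
      rw [← hnormID]
      have hmul := norm_iteratedFDeriv_mul_le (𝕜 := ℝ) (hvi i) (hui i) t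
        (le_refl ((m : ℕ) : WithTop ℕ∞))
      refine hmul.trans ?_
      rw [Finset.sum_range_succ']
      have h0 : (m.choose 0 : ℝ) * ‖iteratedFDeriv ℝ 0 (fun s => deriv ω s i) t‖ *
          ‖iteratedFDeriv ℝ (m - 0)
            (fun s => fderiv ℝ F (ω s) (EuclideanSpace.single i (1 : ℝ))) t‖ ≤
          K * A + c * B * ν := by
        rw [Nat.choose_zero_right, Nat.cast_one, one_mul, Nat.sub_zero]
        have hKAc : 0 ≤ K * A + c * B * ν := by positivity
        have hum : ‖iteratedFDeriv ℝ m
            (fun s => fderiv ℝ F (ω s) (EuclideanSpace.single i (1 : ℝ))) t‖ ≤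
            K * A + c * B * ν := by
          rw [hnormID]; exact hui_top i
        have := mul_le_mul (hv0 i) hum (norm_nonneg _) zero_le_one
        simpa using this
      have h1 : ∑ j ∈ Finset.range m, (m.choose (j + 1) : ℝ) *
          ‖iteratedFDeriv ℝ (j + 1) (fun s => deriv ω s i) t‖ *
          ‖iteratedFDeriv ℝ (m - (j + 1))
            (fun s => fderiv ℝ F (ω s) (EuclideanSpace.single i (1 : ℝ))) t‖ ≤
          (2 ^ m * (m.factorial : ℝ) * (n : ℝ) ^ m) * B * ν := by
        have hterm : ∀ j ∈ Finset.range m, (m.choose (j + 1) : ℝ) *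
            ‖iteratedFDeriv ℝ (j + 1) (fun s => deriv ω s i) t‖ *
            ‖iteratedFDeriv ℝ (m - (j + 1))
              (fun s => fderiv ℝ F (ω s) (EuclideanSpace.single i (1 : ℝ))) t‖ ≤
            (m.choose (j + 1) : ℝ) * (ν * ((m.factorial : ℝ) * B * (n : ℝ) ^ m)) := by
          intro j hj
          rw [Finset.mem_range] at hj
          have hva := hvj i (j + 1) (by omega) (by omega)
          have hub := hui_low i (m - (j + 1)) (by omega)
          have hub2 : ‖iteratedFDeriv ℝ (m - (j + 1))
              (fun s => fderiv ℝ F (ω s) (EuclideanSpace.single i (1 : ℝ))) t‖ ≤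
              (m.factorial : ℝ) * B * (n : ℝ) ^ m := by
            refine hub.trans ?_
            have hf : ((m - (j + 1)).factorial : ℝ) ≤ (m.factorial : ℝ) := by
              exact_mod_cast Nat.factorial_le (by omega)
            have hp : (n : ℝ) ^ (m - (j + 1)) ≤ (n : ℝ) ^ m := pow_le_pow_right₀ hn1 (by omega)
            exact mul_le_mul (mul_le_mul hf le_rfl hB0 (Nat.cast_nonneg _)) hp
              (pow_nonneg (by positivity) _) (mul_nonneg (Nat.cast_nonneg _) hB0)
          have step1 : (m.choose (j + 1) : ℝ) *
              ‖iteratedFDeriv ℝ (j + 1) (fun s => deriv ω s i) t‖ ≤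
              (m.choose (j + 1) : ℝ) * ν := mul_le_mul_of_nonneg_left hva (Nat.cast_nonneg _)
          have step2 := mul_le_mul step1 hub2 (norm_nonneg _)
            (mul_nonneg (Nat.cast_nonneg _) hν0)
          calc (m.choose (j + 1) : ℝ) *
              ‖iteratedFDeriv ℝ (j + 1) (fun s => deriv ω s i) t‖ *
              ‖iteratedFDeriv ℝ (m - (j + 1))
                (fun s => fderiv ℝ F (ω s) (EuclideanSpace.single i (1 : ℝ))) t‖ ≤
              (m.choose (j + 1) : ℝ) * ν * ((m.factorial : ℝ) * B * (n : ℝ) ^ m) := step2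
            _ = (m.choose (j + 1) : ℝ) * (ν * ((m.factorial : ℝ) * B * (n : ℝ) ^ m)) := by ring
        have hchoose : (∑ j ∈ Finset.range m, (m.choose (j + 1) : ℝ)) ≤ 2 ^ m := by
          have hNat : ∑ j ∈ Finset.range m, m.choose (j + 1) ≤ 2 ^ m := by
            have hsp' : ∑ i ∈ Finset.range (m + 1), m.choose i =
                ∑ j ∈ Finset.range m, m.choose (j + 1) + m.choose 0 :=
              Finset.sum_range_succ' (fun i => m.choose i) m
            have htot := Nat.sum_range_choose m
            omega
          calc (∑ j ∈ Finset.range m, (m.choose (j + 1) : ℝ)) =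
              ((∑ j ∈ Finset.range m, m.choose (j + 1) : ℕ) : ℝ) := by push_cast; ring
            _ ≤ ((2 ^ m : ℕ) : ℝ) := by exact_mod_cast hNat
            _ = 2 ^ m := by push_cast; ring
        have hM0 : 0 ≤ ν * ((m.factorial : ℝ) * B * (n : ℝ) ^ m) := by positivity
        calc ∑ j ∈ Finset.range m, (m.choose (j + 1) : ℝ) *
            ‖iteratedFDeriv ℝ (j + 1) (fun s => deriv ω s i) t‖ *
            ‖iteratedFDeriv ℝ (m - (j + 1))
              (fun s => fderiv ℝ F (ω s) (EuclideanSpace.single i (1 : ℝ))) t‖ ≤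
            ∑ j ∈ Finset.range m, (m.choose (j + 1) : ℝ) *
              (ν * ((m.factorial : ℝ) * B * (n : ℝ) ^ m)) := Finset.sum_le_sum hterm
          _ = (∑ j ∈ Finset.range m, (m.choose (j + 1) : ℝ)) *
              (ν * ((m.factorial : ℝ) * B * (n : ℝ) ^ m)) := by rw [← Finset.sum_mul]
          _ ≤ 2 ^ m * (ν * ((m.factorial : ℝ) * B * (n : ℝ) ^ m)) :=
              mul_le_mul_of_nonneg_right hchoose hM0
          _ = (2 ^ m * (m.factorial : ℝ) * (n : ℝ) ^ m) * B * ν := by ring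
      linarith [h0, h1]
    -- assemble
    rw [iteratedDeriv_succ', hderiv_expand, hsum_deriv]
    calc |∑ i : Fin n, iteratedDeriv m
          (fun s => deriv ω s i * fderiv ℝ F (ω s) (EuclideanSpace.single i (1 : ℝ))) t|
        ≤ ∑ i : Fin n, |iteratedDeriv m
          (fun s => deriv ω s i * fderiv ℝ F (ω s) (EuclideanSpace.single i (1 : ℝ))) t| :=
          Finset.abs_sum_le_sum_abs _ _
      _ ≤ ∑ _i : Fin n, ((K * A + c * B * ν) +
            (2 ^ m * (m.factorial : ℝ) * (n : ℝ) ^ m) * B * ν) :=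
          Finset.sum_le_sum fun i _ => hprod_bound i
      _ = (n : ℝ) * ((K * A + c * B * ν) +
            (2 ^ m * (m.factorial : ℝ) * (n : ℝ) ^ m) * B * ν) := by
          rw [Finset.sum_const, Finset.card_univ, Fintype.card_fin, nsmul_eq_mul]
      _ = (n : ℝ) * K * A +
          (n : ℝ) * (c + 2 ^ m * (m.factorial : ℝ) * (n : ℝ) ^ m) * B * ν := by ring

end KeyLemma
section FinalAssembly

open Set Metric Finset

lemma partialMax_nonneg (n l : ℕ) (f : En n → ℝ) (z : En n) : 0 ≤ partialMax n l f z := by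
  unfold partialMax
  exact Real.iSup_nonneg fun _ => abs_nonneg _

lemma abs_le_partialMax (n l : ℕ) (f : En n → ℝ) (z : En n) (α : Fin l → Fin n) :
    |iteratedFDeriv ℝ l f z (fun j => EuclideanSpace.single (α j) (1 : ℝ))| ≤
      partialMax n l f z := by
  unfold partialMax
  exact le_ciSup (f := fun α : Fin l → Fin n =>
      |iteratedFDeriv ℝ l f z (fun j => EuclideanSpace.single (α j) (1 : ℝ))|)
    (Set.Finite.bddAbove (Set.finite_range _)) α

lemma partialMax_le_opNorm {n : ℕ} (hn : 1 ≤ n) (l : ℕ) (f : En n → ℝ) (z : En n) :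
    partialMax n l f z ≤ ‖iteratedFDeriv ℝ l f z‖ := by
  haveI : Nonempty (Fin n) := ⟨⟨0, hn⟩⟩
  unfold partialMax
  refine ciSup_le fun α => ?_
  have h := (iteratedFDeriv ℝ l f z).le_opNorm (fun j => EuclideanSpace.single (α j) (1 : ℝ))
  simp only [EuclideanSpace.norm_single, norm_one, Finset.prod_const_one, mul_one,
    Real.norm_eq_abs] at h
  exact h

lemma opNorm_le_pow_mul {n m : ℕ} (hn : 1 ≤ n)
    (T : ContinuousMultilinearMap ℝ (fun _ : Fin m => En n) ℝ) {P : ℝ}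
    (hP : ∀ α : Fin m → Fin n, |T (fun j => EuclideanSpace.single (α j) (1 : ℝ))| ≤ P) :
    ‖T‖ ≤ (n : ℝ) ^ m * P := by
  have hP0 : 0 ≤ P := le_trans (abs_nonneg _) (hP fun _ => ⟨0, hn⟩)
  refine T.opNorm_le_bound (by positivity) fun v => ?_
  have hveq : v = fun j => ∑ i : Fin n, v j i • EuclideanSpace.single i (1 : ℝ) :=
    funext fun j => (En.decomp (v j)).symm
  have hexp : T v = ∑ r : Fin m → Fin n, (∏ j, v j (r j)) •
      T (fun j => EuclideanSpace.single (r j) (1 : ℝ)) := by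
    conv_lhs => rw [hveq]
    rw [show (T fun j => ∑ i : Fin n, v j i • EuclideanSpace.single i (1 : ℝ)) =
        ∑ r : Fin m → Fin n, T fun j => v j (r j) • EuclideanSpace.single (r j) (1 : ℝ) from
      T.toMultilinearMap.map_sum (g := fun j i => v j i • EuclideanSpace.single i (1 : ℝ))]
    exact Finset.sum_congr rfl fun r _ => T.toMultilinearMap.map_smul_univ _ _
  rw [hexp]
  calc ‖∑ r : Fin m → Fin n, (∏ j, v j (r j)) •
        T (fun j => EuclideanSpace.single (r j) (1 : ℝ))‖
      ≤ ∑ r : Fin m → Fin n, ‖(∏ j, v j (r j)) •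
        T (fun j => EuclideanSpace.single (r j) (1 : ℝ))‖ := norm_sum_le _ _
    _ ≤ ∑ _r : Fin m → Fin n, (∏ j, ‖v j‖) * P := by
        refine Finset.sum_le_sum fun r _ => ?_
        rw [norm_smul]
        have h2 : ‖∏ j, v j (r j)‖ ≤ ∏ j, ‖v j‖ := by
          rw [Real.norm_eq_abs, Finset.abs_prod]
          exact Finset.prod_le_prod (fun j _ => abs_nonneg _)
            (fun j _ => En.abs_coord_le_norm (v j) (r j))
        have h3 : ‖T (fun j => EuclideanSpace.single (r j) (1 : ℝ))‖ ≤ P := by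
          rw [Real.norm_eq_abs]; exact hP r
        exact mul_le_mul h2 h3 (norm_nonneg _) (Finset.prod_nonneg fun j _ => norm_nonneg _)
    _ = (n : ℝ) ^ m * P * ∏ i, ‖v i‖ := by
        rw [Finset.sum_const, Finset.card_univ, nsmul_eq_mul]
        rw [show (Fintype.card (Fin m → Fin n) : ℝ) = (n : ℝ) ^ m by
          rw [Fintype.card_fun, Fintype.card_fin, Fintype.card_fin]; push_cast; ring]
        ring

lemma partialMax_le_Ml {n d : ℕ} (hn : 1 ≤ n) {l : ℕ} (hl : l ≤ d + 1) {f : En n → ℝ}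
    (hf : ContDiff ℝ (d + 1 : ℕ) f) {z : En n} (hz : z ∈ Metric.closedBall (0 : En n) 1) :
    partialMax n l f z ≤ Ml n l f := by
  have hcont : Continuous fun y => ‖iteratedFDeriv ℝ l f y‖ :=
    (hf.continuous_iteratedFDeriv (by exact_mod_cast hl)).norm
  obtain ⟨w0, _, hw0⟩ := (isCompact_closedBall (0 : En n) 1).exists_isMaxOn
    ⟨0, Metric.mem_closedBall_self zero_le_one⟩ hcont.continuousOn
  have hbdd : BddAbove (Set.range fun w : Metric.closedBall (0 : En n) 1 =>
      partialMax n l f (w : En n)) := by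
    refine ⟨‖iteratedFDeriv ℝ l f w0‖, ?_⟩
    rintro x ⟨w, rfl⟩
    exact (partialMax_le_opNorm hn l f w).trans (hw0 w.2)
  unfold Ml
  exact le_ciSup hbdd (⟨z, hz⟩ : Metric.closedBall (0 : En n) 1)

lemma partialMax_le_muF {n d k : ℕ} (hk1 : 1 ≤ k) (hkd : k ≤ d) (f : En n → ℝ) (z : En n) :
    partialMax n k f z ≤ muF n d f z := by
  have hfin : {k : ℕ | 1 ≤ k ∧ k ≤ d}.Finite :=
    (Set.finite_Icc 1 d).subset fun x hx => Set.mem_Icc.mpr hx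
  haveI : Finite {k : ℕ // 1 ≤ k ∧ k ≤ d} := hfin.to_subtype
  unfold muF
  exact le_ciSup (f := fun k : {k : ℕ // 1 ≤ k ∧ k ≤ d} => partialMax n (k : ℕ) f z)
    (Set.Finite.bddAbove (Set.finite_range _)) ⟨k, hk1, hkd⟩

lemma muF_le_glob {n d : ℕ} (hn : 1 ≤ n) (hd : 1 ≤ d) {f : En n → ℝ}
    (hf : ContDiff ℝ (d + 1 : ℕ) f) {z : En n} (hz : z ∈ Metric.closedBall (0 : En n) 1) :
    muF n d f z ≤ muFglob n d f := by
  set S : ℕ → ℝ := fun k =>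
    sSup ((fun y => ‖iteratedFDeriv ℝ k f y‖) '' Metric.closedBall (0 : En n) 1) with hS
  have hbound : ∀ w ∈ Metric.closedBall (0 : En n) 1,
      muF n d f w ≤ ∑ k ∈ Finset.range (d + 1), max (S k) 0 := by
    intro w hw
    haveI : Nonempty {k : ℕ // 1 ≤ k ∧ k ≤ d} := ⟨⟨1, le_refl 1, hd⟩⟩
    unfold muF
    refine ciSup_le ?_
    rintro ⟨k, hk1, hkd⟩
    have hcont : Continuous fun y => ‖iteratedFDeriv ℝ k f y‖ :=
      (hf.continuous_iteratedFDeriv (by exact_mod_cast (by omega : k ≤ d + 1))).norm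
    have h1 : partialMax n k f w ≤ S k := by
      refine (partialMax_le_opNorm hn k f w).trans (le_csSup ?_ ?_)
      · exact ((isCompact_closedBall _ _).image hcont).bddAbove
      · exact Set.mem_image_of_mem _ hw
    refine h1.trans (le_trans (le_max_left (S k) 0) ?_)
    exact Finset.single_le_sum (f := fun k => max (S k) 0)
      (fun j _ => le_max_right _ _) (Finset.mem_range.mpr (by omega))
  have hbdd : BddAbove (Set.range fun w : Metric.closedBall (0 : En n) 1 =>
      muF n d f (w : En n)) := by
    refine ⟨∑ k ∈ Finset.range (d + 1), max (S k) 0, ?_⟩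
    rintro x ⟨w, rfl⟩
    exact hbound w w.2
  unfold muFglob
  exact le_ciSup hbdd (⟨z, hz⟩ : Metric.closedBall (0 : En n) 1)

lemma muFglob_nonneg (n d : ℕ) (f : En n → ℝ) : 0 ≤ muFglob n d f := by
  unfold muFglob muF
  exact Real.iSup_nonneg fun _ => Real.iSup_nonneg fun _ => partialMax_nonneg _ _ _ _

end FinalAssembly
/-- there are `C₁(n,d), C₂(n,d) > 0` such that for every `C^{d+1}` function `f`
on `B^n` and admissible curve `ω`, with `g = f ∘ ω`,
`M_{d+1}(f) ≥ C₁·(M_{d+1}(g) − C₂·μ_d(f)·ν_d(ω))`. -/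
theorem stmt9 (n d : ℕ) (hn : 1 ≤ n) (hd : 1 ≤ d) :
    ∃ C₁ C₂ : ℝ, 0 < C₁ ∧ 0 < C₂ ∧
      ∀ f : En n → ℝ, ContDiff ℝ (d + 1 : ℕ) f →
        ∀ ω : ℝ → En n, ContDiff ℝ (d + 1 : ℕ) ω →
          (∀ t ∈ Set.Icc (-1 : ℝ) 1, ω t ∈ Metric.closedBall (0 : En n) 1) →
          (∀ t ∈ Set.Icc (-1 : ℝ) 1, 0 < curveDer n 1 ω t ∧ curveDer n 1 ω t ≤ 1) →
          nuCurve n d ω ≤ 1 →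
          Ml n (d + 1) f ≥
            C₁ * (MIcc (d + 1) (fun u => f (ω u)) - C₂ * muFglob n d f * nuCurve n d ω) := by
  have hn1 : (1 : ℝ) ≤ (n : ℝ) := by exact_mod_cast hn
  have hn0 : (0 : ℝ) < (n : ℝ) := lt_of_lt_of_le one_pos hn1
  obtain ⟨K, c, hK1, hc0, hkey⟩ := key_estimate n d hn hd (d + 1) (by omega) (le_refl _)
  have hK0 : (0 : ℝ) < K := lt_of_lt_of_le one_pos hK1
  have hKn : (0 : ℝ) < K * (n : ℝ) ^ (d + 1) := by positivity
  refine ⟨(K * (n : ℝ) ^ (d + 1))⁻¹, c * (n : ℝ) ^ d + 1, inv_pos.mpr hKn,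
    add_pos_of_nonneg_of_pos (mul_nonneg hc0 (by positivity)) one_pos, ?_⟩
  intro f hf ω hω hball hsp hnu
  have hν0 : 0 ≤ nuCurve n d ω := nuCurve_nonneg ω
  have hμ0 : 0 ≤ muFglob n d f := muFglob_nonneg n d f
  have hμν : 0 ≤ muFglob n d f * nuCurve n d ω := mul_nonneg hμ0 hν0
  have hB0 : 0 ≤ (n : ℝ) ^ d * muFglob n d f := mul_nonneg (by positivity) hμ0
  -- bound on top derivative of f over the ball
  have hA : ∀ z ∈ Metric.closedBall (0 : En n) 1,
      ‖iteratedFDeriv ℝ (d + 1) f z‖ ≤ (n : ℝ) ^ (d + 1) * Ml n (d + 1) f := by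
    intro z hz
    have hstep := opNorm_le_pow_mul hn (iteratedFDeriv ℝ (d + 1) f z)
      (P := partialMax n (d + 1) f z) (fun α => abs_le_partialMax n (d + 1) f z α)
    exact hstep.trans (mul_le_mul_of_nonneg_left
      (partialMax_le_Ml hn (le_refl (d + 1)) hf hz) (by positivity))
  -- bound on intermediate derivatives of f over the ball
  have hB : ∀ k, 1 ≤ k → k < d + 1 → ∀ z ∈ Metric.closedBall (0 : En n) 1,
      ‖iteratedFDeriv ℝ k f z‖ ≤ (n : ℝ) ^ d * muFglob n d f := by
    intro k hk1 hkd z hz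
    have hstep := opNorm_le_pow_mul hn (iteratedFDeriv ℝ k f z)
      (P := partialMax n k f z) (fun α => abs_le_partialMax n k f z α)
    refine hstep.trans ?_
    have h1 : partialMax n k f z ≤ muFglob n d f :=
      (partialMax_le_muF hk1 (by omega) f z).trans (muF_le_glob hn hd hf hz)
    exact mul_le_mul (pow_le_pow_right₀ hn1 (by omega)) h1
      (partialMax_nonneg _ _ _ _) (by positivity)
  -- pointwise bound on derivatives of g, hence on `MIcc`
  have hMIcc : MIcc (d + 1) (fun u => f (ω u)) ≤
      K * ((n : ℝ) ^ (d + 1) * Ml n (d + 1) f) +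
        c * ((n : ℝ) ^ d * muFglob n d f) * nuCurve n d ω := by
    unfold MIcc
    haveI : Nonempty (Set.Icc (-1 : ℝ) 1) := ⟨⟨0, by norm_num⟩⟩
    refine ciSup_le fun t => ?_
    exact hkey ω hω hball (fun s hs => (hsp s hs).2) hnu f hf
      ((n : ℝ) ^ (d + 1) * Ml n (d + 1) f) ((n : ℝ) ^ d * muFglob n d f) hB0 hA hB t t.2
  rw [ge_iff_le]
  have e1 : c * ((n : ℝ) ^ d * muFglob n d f) * nuCurve n d ω =
      (c * (n : ℝ) ^ d) * (muFglob n d f * nuCurve n d ω) := by ring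
  have e2 : (c * (n : ℝ) ^ d + 1) * muFglob n d f * nuCurve n d ω =
      (c * (n : ℝ) ^ d) * (muFglob n d f * nuCurve n d ω) +
        muFglob n d f * nuCurve n d ω := by ring
  have h1 : MIcc (d + 1) (fun u => f (ω u)) -
      (c * (n : ℝ) ^ d + 1) * muFglob n d f * nuCurve n d ω ≤
      K * (n : ℝ) ^ (d + 1) * Ml n (d + 1) f := by
    have e3 : K * ((n : ℝ) ^ (d + 1) * Ml n (d + 1) f) =
        K * (n : ℝ) ^ (d + 1) * Ml n (d + 1) f := by ring
    linarith [hMIcc, hμν]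
  have h2 := mul_le_mul_of_nonneg_left h1 (le_of_lt (inv_pos.mpr hKn))
  have h3 : (K * (n : ℝ) ^ (d + 1))⁻¹ * (K * (n : ℝ) ^ (d + 1) * Ml n (d + 1) f) =
      Ml n (d + 1) f := by
    field_simp
  linarith [h2, h3.le, h3.ge]
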